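/- Let 0 < R̃ < R₀. There exist constants C̃ > 0 (depending only on R₀) and an absolute constant C > 0 such that for every 0 < ρ < R̃/100, every ball D = B(y,ρ) with 5D ⊆ B(0,R₀) \ B(0,R̃), and every k > 0: the annulus 4D \ 3D contains a ball B̃ of radius ρ/4 on which inf_{x ∈ B̃} e^{2k/|x|} ≥ e^{C̃ k ρ} · sup_{x ∈ 3D \ 2D} e^{2k/|x|}; consequently ∫_{3D \ 2D} e^{2k/|x|} dx ≤ C e^{−C̃ k ρ} ∫_{4D \ 3D} e^{2k/|x|} dx. -/

import Mathlib

open MeasureTheory Metric Real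

noncomputable section

abbrev E2 : Type := EuclideanSpace ℝ (Fin 2)

/-- The Euclidean Laplacian of a real-valued function on `ℝ²`. -/
noncomputable def lap (f : E2 → ℝ) (x : E2) : ℝ :=
  ∑ i : Fin 2, fderiv ℝ (fun y => fderiv ℝ f y (EuclideanSpace.single i 1)) x
    (EuclideanSpace.single i 1)

/-- `u` is a weak solution of `(-h²Δ + V - E)u = 0` on `Ω`. -/
def IsWeakSol (Ω : Set E2) (h : ℝ) (V : E2 → ℝ) (En : ℝ) (u : E2 → ℝ) : Prop :=
  ∀ φ : E2 → ℝ, ContDiff ℝ (⊤ : ℕ∞) φ → HasCompactSupport φ → tsupport φ ⊆ Ω →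
    ∫ x in Ω, u x * (-(h ^ 2) * lap φ x + (V x - En) * φ x) = 0

set_option maxHeartbeats 1000000 in
/-- Weight comparison for the radial Carleman weight `e^{2k/|x|}` around a small hole
`D = B(y,ρ)` with `5D ⊆ B(0,R₀) \ B(0,R̃)`. -/
theorem stmt8 (Rt R₀ : ℝ) (hRt : 0 < Rt) (hRtR₀ : Rt < R₀) :
    ∃ Ct > (0 : ℝ), ∃ C > (0 : ℝ), ∀ ρ : ℝ, 0 < ρ → ρ < Rt / 100 →
      ∀ y : E2, ball y (5 * ρ) ⊆ ball (0 : E2) R₀ \ ball (0 : E2) Rt →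
      ∀ k : ℝ, 0 < k →
        (∃ z : E2, closedBall z (ρ / 4) ⊆ ball y (4 * ρ) \ ball y (3 * ρ) ∧
          ∀ x ∈ closedBall z (ρ / 4), ∀ x' ∈ ball y (3 * ρ) \ ball y (2 * ρ),
            Real.exp (Ct * k * ρ) * Real.exp (2 * k / ‖x'‖) ≤ Real.exp (2 * k / ‖x‖)) ∧
        ∫ x in ball y (3 * ρ) \ ball y (2 * ρ), Real.exp (2 * k / ‖x‖) ≤
          C * Real.exp (-(Ct * k * ρ)) *
            ∫ x in ball y (4 * ρ) \ ball y (3 * ρ), Real.exp (2 * k / ‖x‖) := by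
  have hR₀ : 0 < R₀ := hRt.trans hRtR₀
  refine ⟨1 / (2 * R₀ ^ 2), by positivity, 144, by norm_num, ?_⟩
  intro ρ hρ hρRt y h5 k hk
  set Ct : ℝ := 1 / (2 * R₀ ^ 2) with hCt
  -- basic facts about y
  have hy5 : y ∈ ball (0 : E2) R₀ \ ball (0 : E2) Rt :=
    h5 (mem_ball_self (by linarith))
  have hρ100 : 100 * ρ < Rt := by linarith
  set u : ℝ := ‖y‖ with hu
  have hyR₀ : u < R₀ := by simpa [hu, dist_eq_norm] using hy5.1
  have hyRt : Rt ≤ u := by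
    have := hy5.2; simp [dist_eq_norm] at this; exact this
  clear_value u
  have hy0 : (0:ℝ) < u := lt_of_lt_of_le hRt hyRt
  have hρu : 100 * ρ < u := lt_of_lt_of_le hρ100 hyRt
  -- the shifted center
  set c : ℝ := 1 - 7 / 2 * ρ / u with hc
  set z : E2 := c • y with hz
  have hcu : 7 / 2 * ρ / u < 1 := by
    rw [div_lt_one hy0]; linarith
  have hc0 : 0 < c := by simp only [hc, sub_pos]; exact hcu
  have hzy : ‖z - y‖ = 7 / 2 * ρ := by
    have h1 : z - y = (-(7 / 2 * ρ / u)) • y := by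
      rw [hz, hc, sub_smul, one_smul]; module
    rw [h1, norm_smul, Real.norm_eq_abs, abs_neg, abs_of_pos (by positivity), ← hu]
    field_simp
  have hznorm : ‖z‖ = u - 7 / 2 * ρ := by
    rw [hz, norm_smul, Real.norm_eq_abs, abs_of_pos hc0, hc, ← hu]
    field_simp
  clear_value c z
  have hCtpos : 0 < Ct := by rw [hCt]; positivity
  clear_value Ct
  -- norm bounds for points in the small ball
  have hxbounds : ∀ x ∈ closedBall z (ρ / 4),
      u - 15 / 4 * ρ ≤ ‖x‖ ∧ ‖x‖ ≤ u - 13 / 4 * ρ := by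
    intro x hx
    rw [mem_closedBall, dist_eq_norm] at hx
    have h1 : ‖z‖ - ‖x‖ ≤ ‖x - z‖ := by
      have := norm_sub_norm_le z x
      rw [norm_sub_rev] at this; exact this
    have h2 : ‖x‖ - ‖z‖ ≤ ‖x - z‖ := norm_sub_norm_le x z
    rw [hznorm] at h1 h2
    constructor <;> linarith
  -- the small ball sits in the annulus 4D \ 3D
  have hsub : closedBall z (ρ / 4) ⊆ ball y (4 * ρ) \ ball y (3 * ρ) := by
    intro x hx
    rw [mem_closedBall, dist_eq_norm] at hx
    have h1 : ‖x - y‖ ≤ ‖x - z‖ + ‖z - y‖ := norm_sub_le_norm_sub_add_norm_sub x z y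
    have h2 : ‖z - y‖ - ‖x - z‖ ≤ ‖x - y‖ := by
      have h3 : ‖z - y‖ ≤ ‖z - x‖ + ‖x - y‖ := norm_sub_le_norm_sub_add_norm_sub z x y
      rw [norm_sub_rev z x] at h3; linarith
    rw [hzy] at h1 h2
    constructor
    · rw [mem_ball, dist_eq_norm]; linarith
    · rw [mem_ball, dist_eq_norm, not_lt]; linarith
  -- key pointwise inequality
  have key : ∀ x : E2, x ∈ closedBall z (ρ / 4) → ∀ b : ℝ, u - 3 * ρ ≤ b → b ≤ R₀ →
      Ct * k * ρ + 2 * k / b ≤ 2 * k / ‖x‖ := by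
    intro x hx b hb1 hb2
    obtain ⟨hxl, hxr⟩ := hxbounds x hx
    have hxpos : (0:ℝ) < ‖x‖ := by linarith
    have hbpos : (0:ℝ) < b := by linarith
    rw [← sub_nonneg]
    have heq : 2 * k / ‖x‖ - (Ct * k * ρ + 2 * k / b)
        = (2 * k * b - 2 * k * ‖x‖ - Ct * k * ρ * (‖x‖ * b)) / (‖x‖ * b) := by
      field_simp; ring
    rw [heq]
    apply div_nonneg _ (by positivity)
    have hbb : b - ‖x‖ ≥ ρ / 4 := by linarith
    have hxR₀ : ‖x‖ ≤ R₀ := by linarith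
    have hxb : ‖x‖ * b ≤ R₀ ^ 2 := by nlinarith
    have h1 : Ct * k * ρ * (‖x‖ * b) ≤ Ct * k * ρ * R₀ ^ 2 := by
      apply mul_le_mul_of_nonneg_left hxb
      have := hCtpos; positivity
    have h2 : Ct * k * ρ * R₀ ^ 2 = k * ρ / 2 := by
      rw [hCt]; field_simp
    have h3 : 2 * k * (ρ / 4) ≤ 2 * k * (b - ‖x‖) := by
      apply mul_le_mul_of_nonneg_left hbb (by positivity)
    linarith
  refine ⟨⟨z, hsub, ?_⟩, ?_⟩
  · intro x hx x' hx'
    rw [← Real.exp_add]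
    apply Real.exp_le_exp.mpr
    have hx'1 : u - 3 * ρ ≤ ‖x'‖ := by
      have h1 : ‖y‖ - ‖x'‖ ≤ ‖y - x'‖ := norm_sub_norm_le y x'
      have h2 : ‖y - x'‖ < 3 * ρ := by
        have := hx'.1; rw [mem_ball, dist_eq_norm, norm_sub_rev] at this
        exact this
      rw [← hu] at h1; linarith
    have hx'2 : ‖x'‖ ≤ R₀ := by
      have h3 : x' ∈ ball (0 : E2) R₀ := (h5 (ball_subset_ball (by linarith) hx'.1)).1
      rw [mem_ball, dist_eq_norm, sub_zero] at h3
      exact h3.le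
    exact key x hx ‖x'‖ hx'1 hx'2
  · -- integral comparison
    set f : E2 → ℝ := fun x => Real.exp (2 * k / ‖x‖) with hf
    set A := ball y (3 * ρ) \ ball y (2 * ρ) with hA
    set B := ball y (4 * ρ) \ ball y (3 * ρ) with hB
    set Bt := closedBall z (ρ / 4) with hBt
    set M : ℝ := Real.exp (2 * k / (u - 3 * ρ)) with hM
    have hu3 : (0:ℝ) < u - 3 * ρ := by linarith
    -- the compact set on which f is continuous
    set K := closedBall y (4 * ρ) ∩ (ball y (3 * ρ))ᶜ with hK
    have hKcompact : IsCompact K :=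
      (isCompact_closedBall y _).inter_right isOpen_ball.isClosed_compl
    have hKnorm : ∀ x ∈ K, (0:ℝ) < ‖x‖ := by
      intro x hxK
      have h1 : ‖y‖ - ‖x‖ ≤ ‖y - x‖ := norm_sub_norm_le y x
      have h2 : ‖y - x‖ ≤ 4 * ρ := by
        have := hxK.1; rw [mem_closedBall, dist_eq_norm, norm_sub_rev] at this
        exact this
      rw [← hu] at h1; linarith
    have hcont : ContinuousOn f K := by
      apply Real.continuous_exp.comp_continuousOn
      exact continuousOn_const.div continuous_norm.continuousOn
        (fun x hxK => (hKnorm x hxK).ne')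
    have hfK : IntegrableOn f K := hcont.integrableOn_compact hKcompact
    have hBK : B ⊆ K := fun x hxB => ⟨ball_subset_closedBall hxB.1, hxB.2⟩
    have hfB : IntegrableOn f B := hfK.mono_set hBK
    have hfBt : IntegrableOn f Bt := hfK.mono_set (hsub.trans hBK)
    -- upper bound on A
    have hAfin : volume A < ⊤ :=
      lt_of_le_of_lt (measure_mono Set.diff_subset) measure_ball_lt_top
    have hup : ∫ x in A, f x ≤ M * (volume A).toReal := by
      have h1 : ‖∫ x in A, f x‖ ≤ M * (volume A).toReal := by
        apply norm_setIntegral_le_of_norm_le_const hAfin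
        intro x hxA
        rw [Real.norm_eq_abs, abs_of_pos (Real.exp_pos _)]
        show Real.exp (2 * k / ‖x‖) ≤ Real.exp (2 * k / (u - 3 * ρ))
        apply Real.exp_le_exp.mpr
        have hx1 : u - 3 * ρ < ‖x‖ := by
          have ha : ‖y‖ - ‖x‖ ≤ ‖y - x‖ := norm_sub_norm_le y x
          have hb : ‖y - x‖ < 3 * ρ := by
            have := hxA.1; rw [mem_ball, dist_eq_norm, norm_sub_rev] at this
            exact this
          rw [← hu] at ha; linarith
        exact div_le_div_of_nonneg_left (by positivity) hu3 hx1.le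
      calc ∫ x in A, f x ≤ ‖∫ x in A, f x‖ := le_abs_self _
        _ ≤ M * (volume A).toReal := h1
    -- lower bound on Bt
    have hBtfin : volume Bt < ⊤ := measure_closedBall_lt_top
    have hlow : Real.exp (Ct * k * ρ) * M * (volume Bt).toReal ≤ ∫ x in Bt, f x := by
      apply setIntegral_ge_of_const_le_real measurableSet_closedBall hBtfin.ne _ hfBt
      intro x hxBt
      show Real.exp (Ct * k * ρ) * Real.exp (2 * k / (u - 3 * ρ)) ≤ Real.exp (2 * k / ‖x‖)
      rw [← Real.exp_add]
      apply Real.exp_le_exp.mpr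
      exact key x hxBt (u - 3 * ρ) le_rfl (by linarith)
    have hmono : ∫ x in Bt, f x ≤ ∫ x in B, f x :=
      setIntegral_mono_set hfB
        (Filter.Eventually.of_forall fun x => (Real.exp_pos _).le)
        (HasSubset.Subset.eventuallyLE hsub)
    -- volume comparison
    have hvol : (volume A).toReal ≤ 144 * (volume Bt).toReal := by
      have h1 : volume A ≤ 144 * volume Bt := by
        calc volume A ≤ volume (ball y (3 * ρ)) := measure_mono Set.diff_subset
          _ = ENNReal.ofReal ((3 * ρ) ^ Module.finrank ℝ E2) * volume (ball (0:E2) 1) :=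
              Measure.addHaar_ball volume y (by positivity)
          _ = 144 * (ENNReal.ofReal ((ρ / 4) ^ Module.finrank ℝ E2) * volume (ball (0:E2) 1)) := by
              rw [finrank_euclideanSpace_fin]
              rw [show ((3:ℝ) * ρ) ^ 2 = 144 * (ρ / 4) ^ 2 by ring]
              rw [ENNReal.ofReal_mul (by norm_num), ← mul_assoc]
              norm_num
          _ = 144 * volume (ball z (ρ / 4)) := by
              rw [Measure.addHaar_ball volume z (by positivity)]
          _ ≤ 144 * volume Bt := by
              gcongr
              exact ball_subset_closedBall
      have h2 : (volume A).toReal ≤ ((144 : ENNReal) * volume Bt).toReal :=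
        ENNReal.toReal_mono (by finiteness) h1
      rwa [ENNReal.toReal_mul, show ((144:ENNReal)).toReal = 144 by simp] at h2
    -- put everything together
    have hM0 : 0 < M := Real.exp_pos _
    have hexp1 : Real.exp (-(Ct * k * ρ)) * Real.exp (Ct * k * ρ) = 1 := by
      rw [← Real.exp_add]; simp
    calc ∫ x in A, f x ≤ M * (volume A).toReal := hup
      _ ≤ M * (144 * (volume Bt).toReal) := by
          apply mul_le_mul_of_nonneg_left hvol hM0.le
      _ = 144 * Real.exp (-(Ct * k * ρ)) *
          (Real.exp (Ct * k * ρ) * M * (volume Bt).toReal) := by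
          rw [show (144:ℝ) * Real.exp (-(Ct * k * ρ)) *
              (Real.exp (Ct * k * ρ) * M * (volume Bt).toReal)
            = 144 * (Real.exp (-(Ct * k * ρ)) * Real.exp (Ct * k * ρ)) *
              (M * (volume Bt).toReal) by ring, hexp1]
          ring
      _ ≤ 144 * Real.exp (-(Ct * k * ρ)) * ∫ x in Bt, f x := by
          apply mul_le_mul_of_nonneg_left hlow (by positivity)
      _ ≤ 144 * Real.exp (-(Ct * k * ρ)) * ∫ x in B, f x := by
          apply mul_le_mul_of_nonneg_left hmono (by positivity)
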